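/- The proportional-share fairness notion is not globally monotone, even for additive valuations. Concretely, take 4 agents and 4 items e_1, …, e_4 with additive valuations v_1 = (25, 29, 23, 23), v_2 = (23, 29, 25, 23), v_3 = (23, 23, 25, 29), v_4 = (25, 23, 23, 29) (listing item values in order). Then there is no function f mapping each entitlement vector b (with all entries positive and summing to 1) to an allocation of the 4 items such that: (a) whenever some allocation is acceptable under Prop for b, f(b) is acceptable under Prop for b; and (b) whenever b i-improves b', agent i's value satisfies v_i(f(b)_i) ≥ v_i(f(b')_i). -/

import Mathlib

namespace Stmt10

/-- A partition of the items into (possibly empty) bundles. -/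
def IsPartition {n m : ℕ} (A : Fin n → Finset (Fin m)) : Prop :=
  (∀ i j, i ≠ j → Disjoint (A i) (A j)) ∧ ∀ e, ∃ i, e ∈ A i

/-- Additive value of a bundle. -/
def bval {m : ℕ} (w : Fin m → ℝ) (S : Finset (Fin m)) : ℝ := ∑ e ∈ S, w e

/-- The additive valuations of the four agents. -/
def v : Fin 4 → Fin 4 → ℝ :=
  ![![25, 29, 23, 23], ![23, 29, 25, 23], ![23, 23, 25, 29], ![25, 23, 23, 29]]

/-- An entitlement vector: positive entries summing to 1. -/
def Ent (β : Fin 4 → ℝ) : Prop := (∀ i, 0 < β i) ∧ ∑ i, β i = 1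

/-- `β` i-improves `β'`. -/
def Improves (β β' : Fin 4 → ℝ) (i : Fin 4) : Prop :=
  β' i < β i ∧ ∀ j, j ≠ i → β j ≤ β' j

/-- Acceptable under Prop for entitlement vector `β`. -/
def PropAcc (β : Fin 4 → ℝ) (A : Fin 4 → Finset (Fin 4)) : Prop :=
  IsPartition A ∧ ∀ i, β i * bval (v i) Finset.univ ≤ bval (v i) (A i)

lemma vtot (i : Fin 4) : bval (v i) Finset.univ = 100 := by
  fin_cases i <;> norm_num [bval, v, Fin.sum_univ_four, Matrix.vecHead, Matrix.vecTail, Matrix.cons_val_two, Matrix.cons_val_three]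

lemma fin4cases : ∀ x : Fin 4, x = 0 ∨ x = 1 ∨ x = 2 ∨ x = 3 := by decide

/-- Structure lemma: under a positive entitlement vector, any Prop-acceptable
allocation gives each agent exactly one item, injectively. -/
lemma struct {β : Fin 4 → ℝ} {A : Fin 4 → Finset (Fin 4)}
    (hE : Ent β) (hP : PropAcc β A) :
    ∃ t : Fin 4 → Fin 4, Function.Injective t ∧ ∀ i, A i = {t i} := by
  obtain ⟨⟨hdisj, hcov⟩, hval⟩ := hP
  have hne : ∀ i, (A i).Nonempty := by
    intro i
    rcases Finset.eq_empty_or_nonempty (A i) with h | h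
    · exfalso
      have := hval i
      rw [h, vtot] at this
      simp [bval] at this
      nlinarith [hE.1 i]
    · exact h
  have huniv : Finset.univ.biUnion A = (Finset.univ : Finset (Fin 4)) := by
    apply Finset.eq_univ_iff_forall.mpr
    intro e
    obtain ⟨i, hi⟩ := hcov e
    exact Finset.mem_biUnion.mpr ⟨i, Finset.mem_univ i, hi⟩
  have hcard : ∑ i, (A i).card = 4 := by
    have := Finset.card_biUnion (s := (Finset.univ : Finset (Fin 4))) (t := A)
      (fun i _ j _ hij => hdisj i j hij)
    rw [huniv] at this
    simpa using this.symm
  have h1 : ∀ i, (A i).card = 1 := by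
    have h1le : ∀ i, 1 ≤ (A i).card := fun i => Finset.card_pos.mpr (hne i)
    rw [Fin.sum_univ_four] at hcard
    intro i
    have := h1le 0; have := h1le 1; have := h1le 2; have := h1le 3
    rcases fin4cases i with h | h | h | h <;> subst h <;> omega
  choose t ht using fun i => Finset.card_eq_one.mp (h1 i)
  refine ⟨t, ?_, ht⟩
  intro i j hij
  by_contra hne'
  have := hdisj i j hne'
  rw [ht i, ht j, hij] at this
  simp at this

lemma bval_single (i : Fin 4) (x : Fin 4) : bval (v i) {x} = v i x := by
  simp [bval]

/-- Entitlement vectors used in the certificate. -/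
noncomputable def β0 : Fin 4 → ℝ := fun _ => 1/4
noncomputable def βA : Fin 4 → ℝ := ![1/4, 26/100, 1/4, 24/100]
noncomputable def βB : Fin 4 → ℝ := ![24/100, 1/4, 26/100, 1/4]

lemma Ent0 : Ent β0 := by
  constructor
  · intro i; norm_num [β0]
  · norm_num [β0, Fin.sum_univ_four]

lemma EntA : Ent βA := by
  constructor
  · intro i; fin_cases i <;> norm_num [βA]
  · norm_num [βA, Fin.sum_univ_four, Matrix.vecHead, Matrix.vecTail, Matrix.cons_val_two, Matrix.cons_val_three]

lemma EntB : Ent βB := by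
  constructor
  · intro i; fin_cases i <;> norm_num [βB]
  · norm_num [βB, Fin.sum_univ_four, Matrix.vecHead, Matrix.vecTail, Matrix.cons_val_two, Matrix.cons_val_three]

/-- The matching M1 : agent i gets item i. -/
def M1 : Fin 4 → Finset (Fin 4) := ![{0}, {1}, {2}, {3}]
/-- The matching M2 : agent i gets item i+1. -/
def M2 : Fin 4 → Finset (Fin 4) := ![{1}, {2}, {3}, {0}]

lemma partM1 : IsPartition M1 := by
  constructor
  · decide
  · decide

lemma partM2 : IsPartition M2 := by
  constructor
  · decide
  · decide

lemma accA : PropAcc βA M1 := by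
  refine ⟨partM1, ?_⟩
  intro i
  rw [vtot]
  fin_cases i <;> norm_num [βA, M1, bval, v, Matrix.vecHead, Matrix.vecTail, Matrix.cons_val_two, Matrix.cons_val_three]

lemma accB : PropAcc βB M2 := by
  refine ⟨partM2, ?_⟩
  intro i
  rw [vtot]
  fin_cases i <;> norm_num [βB, M2, bval, v, Matrix.vecHead, Matrix.vecTail, Matrix.cons_val_two, Matrix.cons_val_three]

lemma acc0 : PropAcc β0 M1 := by
  refine ⟨partM1, ?_⟩
  intro i
  rw [vtot]
  fin_cases i <;> norm_num [β0, M1, bval, v, Matrix.vecHead, Matrix.vecTail, Matrix.cons_val_two, Matrix.cons_val_three]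

/-- βA forces agent 3 to get item 3 (value 29). -/
lemma forceA {A : Fin 4 → Finset (Fin 4)} (hP : PropAcc βA A) :
    bval (v 3) (A 3) = 29 := by
  obtain ⟨t, hinj, ht⟩ := struct EntA hP
  have hv : ∀ i, βA i * 100 ≤ v i (t i) := by
    intro i
    have := hP.2 i
    rw [vtot, ht i, bval_single] at this
    exact this
  -- agent 1 needs ≥ 26 : only item 1
  have h1 : t 1 = 1 := by
    have := hv 1
    rcases fin4cases (t 1) with h | h | h | h <;> rw [h] at this <;>
      norm_num [βA, v, Matrix.vecHead, Matrix.vecTail, Matrix.cons_val_two, Matrix.cons_val_three] at this <;> simp [h]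
  -- agent 0 needs ≥ 25 : item 0 or 1; item 1 taken
  have h0 : t 0 = 0 := by
    have := hv 0
    have hne : t 0 ≠ t 1 := fun h => absurd (hinj h) (by decide)
    rw [h1] at hne
    rcases fin4cases (t 0) with h | h | h | h <;> rw [h] at this ⊢ <;>
      norm_num [βA, v, Matrix.vecHead, Matrix.vecTail, Matrix.cons_val_two, Matrix.cons_val_three] at this <;> simp_all
  -- agent 3 needs ≥ 24 : item 0 or 3; item 0 taken
  have h3 : t 3 = 3 := by
    have := hv 3
    have hne : t 3 ≠ t 0 := fun h => absurd (hinj h) (by decide)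
    rw [h0] at hne
    rcases fin4cases (t 3) with h | h | h | h <;> rw [h] at this ⊢ <;>
      norm_num [βA, v, Matrix.vecHead, Matrix.vecTail, Matrix.cons_val_two, Matrix.cons_val_three] at this <;> simp_all
  rw [ht 3, h3, bval_single]
  norm_num [v, Matrix.vecHead, Matrix.vecTail, Matrix.cons_val_two, Matrix.cons_val_three]

/-- βB forces agent 0 to get item 1 (value 29). -/
lemma forceB {A : Fin 4 → Finset (Fin 4)} (hP : PropAcc βB A) :
    bval (v 0) (A 0) = 29 := by
  obtain ⟨t, hinj, ht⟩ := struct EntB hP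
  have hv : ∀ i, βB i * 100 ≤ v i (t i) := by
    intro i
    have := hP.2 i
    rw [vtot, ht i, bval_single] at this
    exact this
  -- agent 2 needs ≥ 26 : only item 3
  have h2 : t 2 = 3 := by
    have := hv 2
    rcases fin4cases (t 2) with h | h | h | h <;> rw [h] at this <;>
      norm_num [βB, v, Matrix.vecHead, Matrix.vecTail, Matrix.cons_val_two, Matrix.cons_val_three] at this <;> simp [h]
  -- agent 3 needs ≥ 25 : item 0 or 3; item 3 taken
  have h3 : t 3 = 0 := by
    have := hv 3
    have hne : t 3 ≠ t 2 := fun h => absurd (hinj h) (by decide)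
    rw [h2] at hne
    rcases fin4cases (t 3) with h | h | h | h <;> rw [h] at this ⊢ <;>
      norm_num [βB, v, Matrix.vecHead, Matrix.vecTail, Matrix.cons_val_two, Matrix.cons_val_three] at this <;> simp_all
  -- agent 0 needs ≥ 24 : item 0 or 1; item 0 taken
  have h0 : t 0 = 1 := by
    have := hv 0
    have hne : t 0 ≠ t 3 := fun h => absurd (hinj h) (by decide)
    rw [h3] at hne
    rcases fin4cases (t 0) with h | h | h | h <;> rw [h] at this ⊢ <;>
      norm_num [βB, v, Matrix.vecHead, Matrix.vecTail, Matrix.cons_val_two, Matrix.cons_val_three] at this <;> simp_all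
  rw [ht 0, h0, bval_single]
  norm_num [v, Matrix.vecHead, Matrix.vecTail, Matrix.cons_val_two, Matrix.cons_val_three]

lemma imp0A : Improves β0 βA 3 := by
  constructor
  · norm_num [β0, βA, Matrix.vecHead, Matrix.vecTail, Matrix.cons_val_two, Matrix.cons_val_three]
  · intro j hj
    fin_cases j <;> simp_all <;> norm_num [β0, βA, Matrix.vecHead, Matrix.vecTail, Matrix.cons_val_two, Matrix.cons_val_three]

lemma imp0B : Improves β0 βB 0 := by
  constructor
  · norm_num [β0, βB]
  · intro j hj
    fin_cases j <;> simp_all <;> norm_num [β0, βB, Matrix.vecHead, Matrix.vecTail, Matrix.cons_val_two, Matrix.cons_val_three]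

theorem stmt_10 :
    ¬ ∃ f : (Fin 4 → ℝ) → (Fin 4 → Finset (Fin 4)),
      (∀ β, Ent β → IsPartition (f β)) ∧
      (∀ β, Ent β → (∃ A, PropAcc β A) → PropAcc β (f β)) ∧
      (∀ β β' i, Ent β → Ent β' → Improves β β' i →
        bval (v i) (f β' i) ≤ bval (v i) (f β i)) := by
  rintro ⟨f, -, hacc, hmono⟩
  have hA : PropAcc βA (f βA) := hacc βA EntA ⟨M1, accA⟩
  have hB : PropAcc βB (f βB) := hacc βB EntB ⟨M2, accB⟩
  have h0 : PropAcc β0 (f β0) := hacc β0 Ent0 ⟨M1, acc0⟩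
  have hm3 : (29 : ℝ) ≤ bval (v 3) (f β0 3) := by
    have := hmono β0 βA 3 Ent0 EntA imp0A
    rw [forceA hA] at this
    exact this
  have hm0 : (29 : ℝ) ≤ bval (v 0) (f β0 0) := by
    have := hmono β0 βB 0 Ent0 EntB imp0B
    rw [forceB hB] at this
    exact this
  -- now derive a contradiction at β0
  obtain ⟨t, hinj, ht⟩ := struct Ent0 h0
  have hv : ∀ i, (25 : ℝ) ≤ v i (t i) := by
    intro i
    have := h0.2 i
    rw [vtot, ht i, bval_single] at this
    norm_num [β0] at this
    exact this
  rw [ht 0, bval_single] at hm0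
  rw [ht 3, bval_single] at hm3
  -- agent 0 value ≥ 29 forces item 1
  have h0' : t 0 = 1 := by
    rcases fin4cases (t 0) with h | h | h | h <;> rw [h] at hm0 <;>
      norm_num [v, Matrix.vecHead, Matrix.vecTail, Matrix.cons_val_two, Matrix.cons_val_three] at hm0 <;> simp [h]
  -- agent 3 value ≥ 29 forces item 3
  have h3' : t 3 = 3 := by
    rcases fin4cases (t 3) with h | h | h | h <;> rw [h] at hm3 <;>
      norm_num [v, Matrix.vecHead, Matrix.vecTail, Matrix.cons_val_two, Matrix.cons_val_three] at hm3 <;> simp [h]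
  -- agent 1 needs ≥ 25 : item 1 or 2; item 1 taken → item 2
  have h1' : t 1 = 2 := by
    have := hv 1
    have hne : t 1 ≠ t 0 := fun h => absurd (hinj h) (by decide)
    rw [h0'] at hne
    rcases fin4cases (t 1) with h | h | h | h <;> rw [h] at this ⊢ <;>
      norm_num [v, Matrix.vecHead, Matrix.vecTail, Matrix.cons_val_two, Matrix.cons_val_three] at this <;> simp_all
  -- agent 2 needs ≥ 25 : item 2 or 3; both taken
  have := hv 2
  have hne2 : t 2 ≠ t 1 := fun h => absurd (hinj h) (by decide)
  have hne3 : t 2 ≠ t 3 := fun h => absurd (hinj h) (by decide)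
  rw [h1'] at hne2
  rw [h3'] at hne3
  rcases fin4cases (t 2) with h | h | h | h <;> rw [h] at this <;>
    norm_num [v, Matrix.vecHead, Matrix.vecTail, Matrix.cons_val_two, Matrix.cons_val_three] at this <;> simp_all

end Stmt10
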